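/- (Proposition 3.2, functional form.) Let n be an integer with 16 ≤ n ≤ 23 and K a real number with 0 ≤ K ≤ 760. Define Θ(y) = θ₃(y)^n − 2n · θ₃(y)^{n−8} · Δ₈(y) + (2n(n − 23) + K) · θ₃(y)^{n−16} · Δ₈(y)² for y > 0. Then Θ(y) > 0 for all y > 0, and θ₃(y)^n / Θ(y) ≤ 1 / (1 − 2n/2⁶ + (2n(n − 23) + K)/2¹²) for all y > 0, with equality at y = 1. In particular, every non-extremal unimodular lattice of dimension n, 16 ≤ n ≤ 23, containing no vector of norm 1 and having kissing number K has secrecy gain χ = 1/(1 − 2n/2⁶ + (2n(n−23)+K)/2¹²), achieved at τ = i. -/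

import Mathlib

open Real

/-- θ₂ on the imaginary axis: θ₂(y) = ∑_{n ∈ ℤ} e^{-π y (n + 1/2)²}. -/
noncomputable def theta2 (y : ℝ) : ℝ := ∑' n : ℤ, Real.exp (-π * y * ((n : ℝ) + 1/2)^2)

/-- θ₃ on the imaginary axis: θ₃(y) = ∑_{n ∈ ℤ} e^{-π y n²}. -/
noncomputable def theta3 (y : ℝ) : ℝ := ∑' n : ℤ, Real.exp (-π * y * (n : ℝ)^2)

/-- θ₄ on the imaginary axis: θ₄(y) = ∑_{n ∈ ℤ} (-1)^n e^{-π y n²}. -/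
noncomputable def theta4 (y : ℝ) : ℝ := ∑' n : ℤ, (-1 : ℝ) ^ n * Real.exp (-π * y * (n : ℝ)^2)

/-- Δ₈ on the imaginary axis: Δ₈(y) = (1/16) θ₂(y)⁴ θ₄(y)⁴. -/
noncomputable def Delta8 (y : ℝ) : ℝ := (1/16 : ℝ) * theta2 y ^ 4 * theta4 y ^ 4

lemma summable_gauss_nat (c d : ℝ) (hc : 0 < c) :
    Summable fun n : ℕ => Real.exp (-c * ((n : ℝ) + d) ^ 2) := by
  refine Summable.of_nonneg_of_le (fun n => (Real.exp_pos _).le)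
    (f := fun n : ℕ => Real.exp (c * (1 - 4 * d) / 4) * Real.exp ((n : ℝ) * (-c))) ?_ ?_
  · intro n
    rw [← Real.exp_add]
    apply Real.exp_le_exp.mpr
    nlinarith [sq_nonneg ((n : ℝ) + d - 1 / 2), hc.le, mul_nonneg hc.le (sq_nonneg ((n : ℝ) + d - 1 / 2))]
  · exact (Real.summable_exp_nat_mul_iff.mpr (by linarith)).mul_left _

lemma summable_gauss (c d : ℝ) (hc : 0 < c) :
    Summable fun n : ℤ => Real.exp (-c * ((n : ℝ) + d) ^ 2) := by
  apply Summable.of_nat_of_neg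
  · exact summable_gauss_nat c d hc
  · refine (summable_gauss_nat c (-d) hc).congr fun n => ?_
    congr 1
    push_cast
    ring

lemma summable_theta3 {y : ℝ} (hy : 0 < y) :
    Summable fun n : ℤ => Real.exp (-π * y * (n : ℝ) ^ 2) := by
  refine (summable_gauss (π * y) 0 (by positivity)).congr fun n => ?_
  congr 1; ring

lemma summable_theta2 {y : ℝ} (hy : 0 < y) :
    Summable fun n : ℤ => Real.exp (-π * y * ((n : ℝ) + 1 / 2) ^ 2) := by
  refine (summable_gauss (π * y) (1 / 2) (by positivity)).congr fun n => ?_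
  congr 1; ring

lemma summable_theta4 {y : ℝ} (hy : 0 < y) :
    Summable fun n : ℤ => (-1 : ℝ) ^ n * Real.exp (-π * y * (n : ℝ) ^ 2) := by
  refine (summable_theta3 hy).of_norm_bounded fun n => ?_
  rw [norm_mul, norm_zpow, norm_neg, norm_one, one_zpow, one_mul,
    Real.norm_eq_abs, abs_of_pos (Real.exp_pos _)]


lemma theta3_pos {y : ℝ} (hy : 0 < y) : 0 < theta3 y :=
  Summable.tsum_pos (summable_theta3 hy) (fun n => (Real.exp_pos _).le) 0 (Real.exp_pos _)

lemma theta2_pos {y : ℝ} (hy : 0 < y) : 0 < theta2 y :=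
  Summable.tsum_pos (summable_theta2 hy) (fun n => (Real.exp_pos _).le) 0 (Real.exp_pos _)

lemma theta4_abs_le {y : ℝ} (hy : 0 < y) : |theta4 y| ≤ theta3 y := by
  have hnorm : ∀ n : ℤ, ‖(-1 : ℝ) ^ n * Real.exp (-π * y * (n : ℝ) ^ 2)‖
      = Real.exp (-π * y * (n : ℝ) ^ 2) := by
    intro n
    rw [norm_mul, norm_zpow, norm_neg, norm_one, one_zpow, one_mul,
      Real.norm_eq_abs, abs_of_pos (Real.exp_pos _)]
  have hs : Summable fun n : ℤ => ‖(-1 : ℝ) ^ n * Real.exp (-π * y * (n : ℝ) ^ 2)‖ :=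
    (summable_theta3 hy).congr fun n => (hnorm n).symm
  have := norm_tsum_le_tsum_norm hs
  rw [Real.norm_eq_abs] at this
  refine this.trans (le_of_eq (tsum_congr fun n => hnorm n))

/-- Even-sum pairs of integers parametrized by `ℤ × ℤ`. -/
noncomputable def evenEquiv : ℤ × ℤ ≃ {p : ℤ × ℤ // Even (p.1 + p.2)} :=
  Equiv.ofBijective (fun q => ⟨(q.1 + q.2, q.1 - q.2), ⟨q.1, by ring⟩⟩) (by
    constructor
    · rintro ⟨a, b⟩ ⟨a', b'⟩ h
      simp only [Subtype.ext_iff, Subtype.mk.injEq, Prod.mk.injEq] at h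
      exact Prod.ext (by omega) (by omega)
    · rintro ⟨⟨m, n⟩, r, hr⟩
      exact ⟨(r, m - r), by simp only [Subtype.ext_iff, Subtype.mk.injEq, Prod.mk.injEq]; omega⟩)

noncomputable def oddEquiv : ℤ × ℤ ≃ {p : ℤ × ℤ // ¬ Even (p.1 + p.2)} :=
  Equiv.ofBijective (fun q => ⟨(q.1 + q.2 + 1, q.1 - q.2), by
      rw [Int.even_iff]; omega⟩) (by
    constructor
    · rintro ⟨a, b⟩ ⟨a', b'⟩ h
      simp only [Subtype.mk.injEq, Prod.mk.injEq] at h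
      exact Prod.ext (by omega) (by omega)
    · rintro ⟨⟨m, n⟩, hmn⟩
      rw [Int.even_iff] at hmn
      refine ⟨((m + n - 1) / 2, m - (m + n - 1) / 2 - 1), ?_⟩
      simp only [Subtype.mk.injEq, Prod.mk.injEq]
      omega)

noncomputable def evenEquiv2 : ℤ × ℤ ≃ {p : ℤ × ℤ // Even (p.1 - p.2)} :=
  Equiv.ofBijective (fun q => ⟨(q.1 + q.2, q.1 - q.2), ⟨q.2, by ring⟩⟩) (by
    constructor
    · rintro ⟨a, b⟩ ⟨a', b'⟩ h
      simp only [Subtype.ext_iff, Subtype.mk.injEq, Prod.mk.injEq] at h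
      exact Prod.ext (by omega) (by omega)
    · rintro ⟨⟨m, n⟩, r, hr⟩
      exact ⟨(m - r, r), by simp only [Subtype.ext_iff, Subtype.mk.injEq, Prod.mk.injEq]; omega⟩)

noncomputable def oddEquiv2 : ℤ × ℤ ≃ {p : ℤ × ℤ // ¬ Even (p.1 - p.2)} :=
  Equiv.ofBijective (fun q => ⟨(q.1 + q.2, q.1 - q.2 - 1), by
      rw [Int.even_iff]; omega⟩) (by
    constructor
    · rintro ⟨a, b⟩ ⟨a', b'⟩ h
      simp only [Subtype.mk.injEq, Prod.mk.injEq] at h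
      exact Prod.ext (by omega) (by omega)
    · rintro ⟨⟨m, n⟩, hmn⟩
      rw [Int.even_iff] at hmn
      refine ⟨(m - (m - n - 1) / 2, (m - n - 1) / 2), ?_⟩
      simp only [Subtype.mk.injEq, Prod.mk.injEq]
      omega)

lemma tsum_split {F : ℤ × ℤ → ℝ} (hF : Summable F) (s : Set (ℤ × ℤ))
    (e : ℤ × ℤ ≃ s) (e' : ℤ × ℤ ≃ ↥sᶜ) :
    ∑' p, F p = (∑' q, F (e q)) + ∑' q, F (e' q) := by
  rw [← Summable.tsum_add_tsum_compl (s := s) (hF.subtype s) (hF.subtype sᶜ),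
    ← e.tsum_eq (fun x : s => F x), ← e'.tsum_eq (fun x : ↥sᶜ => F x)]

lemma ns3 {y : ℝ} (hy : 0 < y) :
    Summable fun n : ℤ => ‖Real.exp (-π * y * (n : ℝ) ^ 2)‖ :=
  (summable_theta3 hy).congr fun n =>
    (Real.norm_eq_abs _ ▸ abs_of_pos (Real.exp_pos _)).symm

lemma ns2 {y : ℝ} (hy : 0 < y) :
    Summable fun n : ℤ => ‖Real.exp (-π * y * ((n : ℝ) + 1 / 2) ^ 2)‖ :=
  (summable_theta2 hy).congr fun n =>
    (Real.norm_eq_abs _ ▸ abs_of_pos (Real.exp_pos _)).symm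

lemma ns4 {y : ℝ} (hy : 0 < y) :
    Summable fun n : ℤ => ‖(-1 : ℝ) ^ n * Real.exp (-π * y * (n : ℝ) ^ 2)‖ :=
  (summable_theta3 hy).congr fun n => by
    rw [norm_mul, norm_zpow, norm_neg, norm_one, one_zpow, one_mul,
      Real.norm_eq_abs, abs_of_pos (Real.exp_pos _)]

lemma tsum_prod_eq {g h : ℤ → ℝ} (hg : Summable fun n => ‖g n‖)
    (hh : Summable fun n => ‖h n‖) :
    ∑' q : ℤ × ℤ, g q.1 * h q.2 = (∑' n, g n) * ∑' n, h n :=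
  (tsum_mul_tsum_of_summable_norm hg hh).symm

set_option maxHeartbeats 1000000 in
lemma idA {y : ℝ} (hy : 0 < y) :
    theta3 y * theta3 y
      = theta3 (2 * y) * theta3 (2 * y) + theta2 (2 * y) * theta2 (2 * y) := by
  have h2y : (0 : ℝ) < 2 * y := by linarith
  have hFs : Summable fun p : ℤ × ℤ =>
      Real.exp (-π * y * (p.1 : ℝ) ^ 2) * Real.exp (-π * y * (p.2 : ℝ) ^ 2) :=
    summable_mul_of_summable_norm (ns3 hy) (ns3 hy)
  have h1 : theta3 y * theta3 y = ∑' p : ℤ × ℤ,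
      Real.exp (-π * y * (p.1 : ℝ) ^ 2) * Real.exp (-π * y * (p.2 : ℝ) ^ 2) :=
    tsum_mul_tsum_of_summable_norm (ns3 hy) (ns3 hy)
  rw [h1, tsum_split hFs {p : ℤ × ℤ | Even (p.1 + p.2)} evenEquiv oddEquiv]
  congr 1
  · have he : ∀ q : ℤ × ℤ,
        Real.exp (-π * y * ((q.1 + q.2 : ℤ) : ℝ) ^ 2)
          * Real.exp (-π * y * ((q.1 - q.2 : ℤ) : ℝ) ^ 2)
        = Real.exp (-π * (2 * y) * (q.1 : ℝ) ^ 2)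
          * Real.exp (-π * (2 * y) * (q.2 : ℝ) ^ 2) := by
      intro q
      rw [← Real.exp_add, ← Real.exp_add]
      congr 1
      push_cast
      ring
    refine Eq.trans (tsum_congr fun q => ?_)
      (Eq.trans (tsum_prod_eq (ns3 h2y) (ns3 h2y)) rfl)
    exact he q
  · have he : ∀ q : ℤ × ℤ,
        Real.exp (-π * y * ((q.1 + q.2 + 1 : ℤ) : ℝ) ^ 2)
          * Real.exp (-π * y * ((q.1 - q.2 : ℤ) : ℝ) ^ 2)
        = Real.exp (-π * (2 * y) * ((q.1 : ℝ) + 1 / 2) ^ 2)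
          * Real.exp (-π * (2 * y) * ((q.2 : ℝ) + 1 / 2) ^ 2) := by
      intro q
      rw [← Real.exp_add, ← Real.exp_add]
      congr 1
      push_cast
      ring
    refine Eq.trans (tsum_congr fun q => ?_)
      (Eq.trans (tsum_prod_eq (ns2 h2y) (ns2 h2y)) rfl)
    exact he q

lemma sign_even (a b : ℤ) : ((-1 : ℝ) ^ (a + b)) * ((-1 : ℝ) ^ (a - b)) = 1 := by
  rw [← zpow_add₀ (by norm_num : (-1 : ℝ) ≠ 0),
    show a + b + (a - b) = 2 * a by ring, zpow_mul]
  norm_num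

lemma sign_odd (a b : ℤ) : ((-1 : ℝ) ^ (a + b + 1)) * ((-1 : ℝ) ^ (a - b)) = -1 := by
  rw [← zpow_add₀ (by norm_num : (-1 : ℝ) ≠ 0),
    show a + b + 1 + (a - b) = 2 * a + 1 by ring,
    zpow_add₀ (by norm_num : (-1 : ℝ) ≠ 0), zpow_mul]
  norm_num

set_option maxHeartbeats 1000000 in
lemma idB {y : ℝ} (hy : 0 < y) :
    theta4 y * theta4 y
      = theta3 (2 * y) * theta3 (2 * y) - theta2 (2 * y) * theta2 (2 * y) := by
  have h2y : (0 : ℝ) < 2 * y := by linarith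
  have hFs : Summable fun p : ℤ × ℤ =>
      ((-1 : ℝ) ^ p.1 * Real.exp (-π * y * (p.1 : ℝ) ^ 2))
        * ((-1 : ℝ) ^ p.2 * Real.exp (-π * y * (p.2 : ℝ) ^ 2)) :=
    summable_mul_of_summable_norm (ns4 hy) (ns4 hy)
  have h1 : theta4 y * theta4 y = ∑' p : ℤ × ℤ,
      ((-1 : ℝ) ^ p.1 * Real.exp (-π * y * (p.1 : ℝ) ^ 2))
        * ((-1 : ℝ) ^ p.2 * Real.exp (-π * y * (p.2 : ℝ) ^ 2)) :=
    tsum_mul_tsum_of_summable_norm (ns4 hy) (ns4 hy)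
  rw [h1, tsum_split hFs {p : ℤ × ℤ | Even (p.1 + p.2)} evenEquiv oddEquiv,
    sub_eq_add_neg]
  congr 1
  · have he : ∀ q : ℤ × ℤ,
        ((-1 : ℝ) ^ (q.1 + q.2) * Real.exp (-π * y * ((q.1 + q.2 : ℤ) : ℝ) ^ 2))
          * ((-1 : ℝ) ^ (q.1 - q.2) * Real.exp (-π * y * ((q.1 - q.2 : ℤ) : ℝ) ^ 2))
        = Real.exp (-π * (2 * y) * (q.1 : ℝ) ^ 2)
          * Real.exp (-π * (2 * y) * (q.2 : ℝ) ^ 2) := by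
      intro q
      rw [mul_mul_mul_comm, sign_even, one_mul, ← Real.exp_add, ← Real.exp_add]
      congr 1
      push_cast
      ring
    refine Eq.trans (tsum_congr fun q => ?_)
      (Eq.trans (tsum_prod_eq (ns3 h2y) (ns3 h2y)) rfl)
    exact he q
  · have he : ∀ q : ℤ × ℤ,
        ((-1 : ℝ) ^ (q.1 + q.2 + 1) * Real.exp (-π * y * ((q.1 + q.2 + 1 : ℤ) : ℝ) ^ 2))
          * ((-1 : ℝ) ^ (q.1 - q.2) * Real.exp (-π * y * ((q.1 - q.2 : ℤ) : ℝ) ^ 2))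
        = -(Real.exp (-π * (2 * y) * ((q.1 : ℝ) + 1 / 2) ^ 2)
          * Real.exp (-π * (2 * y) * ((q.2 : ℝ) + 1 / 2) ^ 2)) := by
      intro q
      rw [mul_mul_mul_comm, sign_odd, ← Real.exp_add, ← Real.exp_add, neg_one_mul]
      congr 2
      push_cast
      ring
    refine Eq.trans (tsum_congr (g := fun q : ℤ × ℤ =>
        -(Real.exp (-π * (2 * y) * ((q.1 : ℝ) + 1 / 2) ^ 2)
          * Real.exp (-π * (2 * y) * ((q.2 : ℝ) + 1 / 2) ^ 2))) fun q => he q) ?_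
    rw [tsum_neg]
    exact congrArg Neg.neg (Eq.trans (tsum_prod_eq (ns2 h2y) (ns2 h2y)) rfl)

set_option maxHeartbeats 1000000 in
lemma idC {y : ℝ} (hy : 0 < y) :
    theta2 y * theta2 y
      = theta2 (2 * y) * theta3 (2 * y) + theta3 (2 * y) * theta2 (2 * y) := by
  have h2y : (0 : ℝ) < 2 * y := by linarith
  have hFs : Summable fun p : ℤ × ℤ =>
      Real.exp (-π * y * ((p.1 : ℝ) + 1 / 2) ^ 2)
        * Real.exp (-π * y * ((p.2 : ℝ) + 1 / 2) ^ 2) :=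
    summable_mul_of_summable_norm (ns2 hy) (ns2 hy)
  have h1 : theta2 y * theta2 y = ∑' p : ℤ × ℤ,
      Real.exp (-π * y * ((p.1 : ℝ) + 1 / 2) ^ 2)
        * Real.exp (-π * y * ((p.2 : ℝ) + 1 / 2) ^ 2) :=
    tsum_mul_tsum_of_summable_norm (ns2 hy) (ns2 hy)
  rw [h1, tsum_split hFs {p : ℤ × ℤ | Even (p.1 - p.2)} evenEquiv2 oddEquiv2]
  congr 1
  · have he : ∀ q : ℤ × ℤ,
        Real.exp (-π * y * (((q.1 + q.2 : ℤ) : ℝ) + 1 / 2) ^ 2)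
          * Real.exp (-π * y * (((q.1 - q.2 : ℤ) : ℝ) + 1 / 2) ^ 2)
        = Real.exp (-π * (2 * y) * ((q.1 : ℝ) + 1 / 2) ^ 2)
          * Real.exp (-π * (2 * y) * (q.2 : ℝ) ^ 2) := by
      intro q
      rw [← Real.exp_add, ← Real.exp_add]
      congr 1
      push_cast
      ring
    refine Eq.trans (tsum_congr fun q => ?_)
      (Eq.trans (tsum_prod_eq (ns2 h2y) (ns3 h2y)) rfl)
    exact he q
  · have he : ∀ q : ℤ × ℤ,
        Real.exp (-π * y * (((q.1 + q.2 : ℤ) : ℝ) + 1 / 2) ^ 2)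
          * Real.exp (-π * y * (((q.1 - q.2 - 1 : ℤ) : ℝ) + 1 / 2) ^ 2)
        = Real.exp (-π * (2 * y) * (q.1 : ℝ) ^ 2)
          * Real.exp (-π * (2 * y) * ((q.2 : ℝ) + 1 / 2) ^ 2) := by
      intro q
      rw [← Real.exp_add, ← Real.exp_add]
      congr 1
      push_cast
      ring
    refine Eq.trans (tsum_congr fun q => ?_)
      (Eq.trans (tsum_prod_eq (ns3 h2y) (ns2 h2y)) rfl)
    exact he q

lemma theta_two_four_one :
    (∑' n : ℤ, Real.exp (-π * 1 * ((n : ℝ) + 1/2)^2))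
      = ∑' n : ℤ, (-1 : ℝ) ^ n * Real.exp (-π * 1 * (n : ℝ)^2) := by
  have key := Complex.tsum_exp_neg_quadratic (a := 1) (by norm_num) (Complex.I / 2)
  -- LHS of key: ∑ cexp (-π n² + π I n) = θ₄(1); RHS: ∑ cexp (-π (n - 1/2)²) = θ₂(1)
  have hL : (∑' n : ℤ, Complex.exp (-(π : ℂ) * 1 * (n : ℂ) ^ 2 + 2 * π * (Complex.I / 2) * n))
      = ((∑' n : ℤ, (-1 : ℝ) ^ n * Real.exp (-π * 1 * (n : ℝ)^2) : ℝ) : ℂ) := by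
    rw [Complex.ofReal_tsum]
    refine tsum_congr fun n => ?_
    have h1 : (-(π : ℂ) * 1 * (n : ℂ) ^ 2 + 2 * π * (Complex.I / 2) * n)
        = ((-π * 1 * (n : ℝ)^2 : ℝ) : ℂ) + n * (π * Complex.I) := by
      push_cast; ring
    rw [h1, Complex.exp_add, Complex.exp_int_mul, Complex.exp_pi_mul_I]
    push_cast
    ring
  have hR : (∑' n : ℤ, Complex.exp (-(π : ℂ) / 1 * ((n : ℂ) + Complex.I * (Complex.I / 2)) ^ 2))
      = ((∑' n : ℤ, Real.exp (-π * 1 * ((n : ℝ) + 1/2)^2) : ℝ) : ℂ) := by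
    rw [Complex.ofReal_tsum, ← (Equiv.neg ℤ).tsum_eq
      (fun n : ℤ => ((Real.exp (-π * 1 * ((n : ℝ) + 1/2)^2) : ℝ) : ℂ))]
    refine tsum_congr fun n => ?_
    have h1 : (-(π : ℂ) / 1 * ((n : ℂ) + Complex.I * (Complex.I / 2)) ^ 2)
        = ((-π * 1 * (((-n : ℤ) : ℝ) + 1/2)^2 : ℝ) : ℂ) := by
      have hI : Complex.I * (Complex.I / 2) = -(1/2 : ℂ) := by
        rw [← mul_div_assoc, Complex.I_mul_I]; norm_num
      rw [hI]; push_cast; ring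
    rw [h1, Complex.ofReal_exp]
    simp [Equiv.neg_apply]
  rw [hL, hR] at key
  have h1 : (1 : ℂ) / (1 : ℂ) ^ ((1:ℂ)/2) = 1 := by norm_num
  rw [h1, one_mul] at key
  exact_mod_cast key.symm


lemma jacobi {y : ℝ} (hy : 0 < y) :
    theta2 y ^ 4 + theta4 y ^ 4 = theta3 y ^ 4 := by
  have hA := idA hy
  have hB := idB hy
  have hC := idC hy
  linear_combination (theta2 y * theta2 y + theta2 (2*y) * theta3 (2*y)
      + theta3 (2*y) * theta2 (2*y)) * hC
    + (theta4 y * theta4 y + theta3 (2*y) * theta3 (2*y)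
      - theta2 (2*y) * theta2 (2*y)) * hB
    - (theta3 y * theta3 y + theta3 (2*y) * theta3 (2*y)
      + theta2 (2*y) * theta2 (2*y)) * hA

lemma theta2_eq_theta4_one : theta2 1 = theta4 1 := theta_two_four_one

lemma delta8_nonneg (y : ℝ) : 0 ≤ Delta8 y := by
  unfold Delta8; positivity

lemma delta8_le {y : ℝ} (hy : 0 < y) : 64 * Delta8 y ≤ theta3 y ^ 8 := by
  have hj := jacobi hy
  have hj2 : (theta2 y ^ 4 + theta4 y ^ 4) ^ 2 = (theta3 y ^ 4) ^ 2 := by rw [hj]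
  unfold Delta8
  nlinarith [hj2, sq_nonneg (theta2 y ^ 4 - theta4 y ^ 4)]

lemma delta8_one : 64 * Delta8 1 = theta3 1 ^ 8 := by
  have hj := jacobi (y := 1) one_pos
  have h4 : theta2 1 ^ 4 = theta4 1 ^ 4 := by rw [theta2_eq_theta4_one]
  unfold Delta8
  linear_combination (-(theta2 1 ^ 4 - theta4 1 ^ 4)) * h4
    + (theta2 1 ^ 4 + theta4 1 ^ 4 + theta3 1 ^ 4) * hj

lemma key_quadratic {N K t : ℝ} (hN16 : 16 ≤ N) (hN23 : N ≤ 23)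
    (hK0 : 0 ≤ K) (hK : K ≤ 760) (ht0 : 0 ≤ t) (ht : t ≤ 1/64) :
    (0 < 1 - 2*N/2^6 + (2*N*(N-23)+K)/2^12) ∧
      1 - 2*N/2^6 + (2*N*(N-23)+K)/2^12 ≤ 1 - 2*N*t + (2*N*(N-23)+K)*t^2 := by
  constructor
  · nlinarith [mul_nonneg (by linarith : (0:ℝ) ≤ N - 16) (by linarith : (0:ℝ) ≤ N - 7)]
  · have h1 : 0 ≤ 1/64 - t := by linarith
    have h2 : 0 ≤ 2*N - (2*N*(N-23)+K) * (t + 1/64) := by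
      rcases le_or_gt (2*N*(N-23)+K) 0 with hc | hc
      · nlinarith
      · nlinarith [mul_nonneg (by linarith : (0:ℝ) ≤ 23 - N) (by linarith : (0:ℝ) ≤ N)]
    nlinarith [mul_nonneg h1 h2]

lemma main_aux (n : ℕ) (hn16 : 16 ≤ n) (hn23 : n ≤ 23)
    (K : ℝ) (hK0 : 0 ≤ K) (hK : K ≤ 760) (y : ℝ) (hy : 0 < y) :
    0 < theta3 y ^ n - 2 * (n : ℝ) * theta3 y ^ (n - 8) * Delta8 y
        + (2 * (n : ℝ) * ((n : ℝ) - 23) + K) * theta3 y ^ (n - 16) * Delta8 y ^ 2 ∧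
    theta3 y ^ n / (theta3 y ^ n - 2 * (n : ℝ) * theta3 y ^ (n - 8) * Delta8 y
        + (2 * (n : ℝ) * ((n : ℝ) - 23) + K) * theta3 y ^ (n - 16) * Delta8 y ^ 2)
      ≤ 1 / (1 - 2 * (n : ℝ) / 2 ^ 6 + (2 * (n : ℝ) * ((n : ℝ) - 23) + K) / 2 ^ 12) ∧
    (64 * Delta8 y = theta3 y ^ 8 →
      theta3 y ^ n / (theta3 y ^ n - 2 * (n : ℝ) * theta3 y ^ (n - 8) * Delta8 y
        + (2 * (n : ℝ) * ((n : ℝ) - 23) + K) * theta3 y ^ (n - 16) * Delta8 y ^ 2)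
      = 1 / (1 - 2 * (n : ℝ) / 2 ^ 6 + (2 * (n : ℝ) * ((n : ℝ) - 23) + K) / 2 ^ 12)) := by
  have hN16 : (16 : ℝ) ≤ (n : ℝ) := by exact_mod_cast hn16
  have hN23 : (n : ℝ) ≤ 23 := by exact_mod_cast hn23
  set N : ℝ := (n : ℝ) with hN
  set c : ℝ := 2 * N * (N - 23) + K with hc
  have hq : 0 < theta3 y := theta3_pos hy
  set q : ℝ := theta3 y with hqdef
  set t : ℝ := Delta8 y / q ^ 8 with htdef
  have hq8 : (0:ℝ) < q ^ 8 := pow_pos hq 8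
  have ht0 : 0 ≤ t := div_nonneg (delta8_nonneg y) hq8.le
  have ht : t ≤ 1/64 := by
    rw [htdef, div_le_iff₀ hq8]
    nlinarith [delta8_le hy]
  have hD : Delta8 y = q ^ 8 * t := by
    rw [htdef, mul_div_cancel₀ _ (ne_of_gt hq8)]
  have e1 : q ^ (n - 8) * q ^ 8 = q ^ n := by
    rw [← pow_add, Nat.sub_add_cancel (by omega : 8 ≤ n)]
  have e2 : q ^ (n - 16) * (q ^ 8) ^ 2 = q ^ n := by
    rw [← pow_mul, ← pow_add, Nat.sub_add_cancel (by omega : 16 ≤ n)]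
  have hV : q ^ n - 2 * N * q ^ (n - 8) * Delta8 y + c * q ^ (n - 16) * Delta8 y ^ 2
      = q ^ n * (1 - 2 * N * t + c * t ^ 2) := by
    rw [hD]
    linear_combination (-2 * N * t) * e1 + (c * t ^ 2) * e2
  obtain ⟨hEpos, hEle⟩ := key_quadratic (K := K) (t := t) hN16 hN23 hK0 hK ht0 ht
  have hfpos : 0 < 1 - 2 * N * t + c * t ^ 2 := lt_of_lt_of_le hEpos hEle
  have hqn : (0:ℝ) < q ^ n := pow_pos hq n
  have hratio : q ^ n / (q ^ n - 2 * N * q ^ (n - 8) * Delta8 y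
      + c * q ^ (n - 16) * Delta8 y ^ 2) = 1 / (1 - 2 * N * t + c * t ^ 2) := by
    rw [hV, div_mul_eq_div_div, div_self (ne_of_gt hqn)]
  refine ⟨by rw [hV]; exact mul_pos hqn hfpos, ?_, ?_⟩
  · rw [hratio]
    exact one_div_le_one_div_of_le hEpos hEle
  · intro heq
    have hDval : Delta8 y = q ^ 8 / 64 := by linarith
    have ht64 : t = 1/64 := by
      rw [htdef, hDval]
      field_simp
    rw [hratio, ht64]
    congr 1
    ring


/-- Proposition 3.2 (functional form): for 16 ≤ n ≤ 23, 0 ≤ K ≤ 760 and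
Θ(y) = θ₃(y)^n − 2n θ₃(y)^{n−8} Δ₈(y) + (2n(n − 23) + K) θ₃(y)^{n−16} Δ₈(y)²,
one has Θ(y) > 0 for all y > 0 and
θ₃(y)^n / Θ(y) ≤ 1/(1 − 2n/2⁶ + (2n(n − 23) + K)/2¹²) for all y > 0, with
equality at y = 1; in particular every non-extremal unimodular lattice of
dimension n with no vectors of norm 1 and kissing number K has secrecy gain
1/(1 − 2n/2⁶ + (2n(n−23)+K)/2¹²), achieved at τ = i. -/
theorem secrecy_gain_nonextremal (n : ℕ) (hn16 : 16 ≤ n) (hn23 : n ≤ 23)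
    (K : ℝ) (hK0 : 0 ≤ K) (hK : K ≤ 760) (Θ : ℝ → ℝ)
    (hΘ : ∀ y : ℝ, 0 < y →
      Θ y = theta3 y ^ n - 2 * (n : ℝ) * theta3 y ^ (n - 8) * Delta8 y
        + (2 * (n : ℝ) * ((n : ℝ) - 23) + K) * theta3 y ^ (n - 16) * Delta8 y ^ 2) :
    (∀ y : ℝ, 0 < y → 0 < Θ y) ∧
    (∀ y : ℝ, 0 < y → theta3 y ^ n / Θ y
      ≤ 1 / (1 - 2 * (n : ℝ) / 2 ^ 6 + (2 * (n : ℝ) * ((n : ℝ) - 23) + K) / 2 ^ 12)) ∧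
    theta3 1 ^ n / Θ 1
      = 1 / (1 - 2 * (n : ℝ) / 2 ^ 6 + (2 * (n : ℝ) * ((n : ℝ) - 23) + K) / 2 ^ 12) := by
  refine ⟨fun y hy => ?_, fun y hy => ?_, ?_⟩
  · rw [hΘ y hy]
    exact (main_aux n hn16 hn23 K hK0 hK y hy).1
  · rw [hΘ y hy]
    exact (main_aux n hn16 hn23 K hK0 hK y hy).2.1
  · rw [hΘ 1 one_pos]
    exact (main_aux n hn16 hn23 K hK0 hK 1 one_pos).2.2 delta8_one
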